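/- Let R = M_n(F) = ⊕_{g∈G} R_g be endowed with a fine grading by a group G. Then the support {g ∈ G : R_g ≠ 0} is a subgroup of G. -/

import Mathlib

open DirectSum Matrix

/-- in a fine grading of `Mₙ(F)`, `n ≥ 1`, by a group `G`,
the support `{g : ℛ g ≠ 0}` is a subgroup of `G`. -/
theorem fine_grading_support_subgroup {F : Type*} [Field F] {G : Type*} [Group G]
    [DecidableEq G] {n : ℕ} (hn : 0 < n) (ℛ : G → Submodule F (Matrix (Fin n) (Fin n) F))
    (hdecomp : DirectSum.IsInternal ℛ)
    (hone : (1 : Matrix (Fin n) (Fin n) F) ∈ ℛ 1)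
    (hmulmem : ∀ (g h : G) (x y : Matrix (Fin n) (Fin n) F),
      x ∈ ℛ g → y ∈ ℛ h → x * y ∈ ℛ (g * h))
    (hfine : ∀ g : G, Module.finrank F (ℛ g) ≤ 1) :
    ∃ H : Subgroup G, ∀ g : G, g ∈ H ↔ ℛ g ≠ ⊥ := by
  classical
  haveI : Nonempty (Fin n) := ⟨⟨0, hn⟩⟩
  haveI := hdecomp.chooseDecomposition
  have hone_ne : (1 : Matrix (Fin n) (Fin n) F) ≠ 0 := by
    intro h
    have := congrFun (congrFun h ⟨0, hn⟩) ⟨0, hn⟩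
    rw [Matrix.one_apply_eq, Matrix.zero_apply] at this
    exact one_ne_zero this
  -- the degree-one projection, as an additive monoid hom
  let π : Matrix (Fin n) (Fin n) F →+ Matrix (Fin n) (Fin n) F :=
    ((ℛ 1).subtype.toAddMonoidHom).comp
      ((DFinsupp.evalAddMonoidHom (1 : G)).comp
        (DirectSum.decomposeAddEquiv ℛ).toAddMonoidHom)
  have hπ : ∀ z : Matrix (Fin n) (Fin n) F,
      π z = (DirectSum.decompose ℛ z 1 : Matrix (Fin n) (Fin n) F) := fun _ => rfl
  have hπ1 : π 1 = 1 := by rw [hπ, DirectSum.decompose_of_mem_same ℛ hone]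
  -- every element of `ℛ 1` is a scalar multiple of `1`
  have hR1 : ∀ w : Matrix (Fin n) (Fin n) F, w ∈ ℛ 1 →
      ∃ c : F, w = c • (1 : Matrix (Fin n) (Fin n) F) := by
    intro w hw
    obtain ⟨v, hv⟩ := finrank_le_one_iff.mp (hfine 1)
    obtain ⟨c1, hc1⟩ := hv ⟨1, hone⟩
    obtain ⟨cw, hcw⟩ := hv ⟨w, hw⟩
    have hc1' : c1 • (v : Matrix (Fin n) (Fin n) F) = 1 := congrArg Subtype.val hc1
    have hcw' : cw • (v : Matrix (Fin n) (Fin n) F) = w := congrArg Subtype.val hcw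
    have hc1ne : c1 ≠ 0 := by
      rintro rfl
      rw [zero_smul] at hc1'
      exact hone_ne hc1'.symm
    refine ⟨cw * c1⁻¹, ?_⟩
    rw [← hcw', ← hc1', smul_smul, mul_assoc, inv_mul_cancel₀ hc1ne, mul_one]
  -- every nonzero homogeneous element is a unit
  have hunit : ∀ (g : G) (x : Matrix (Fin n) (Fin n) F), x ∈ ℛ g → x ≠ 0 → IsUnit x := by
    intro g x hxg hx
    obtain ⟨i, j, hij⟩ : ∃ i j, x i j ≠ 0 := by
      by_contra h
      push_neg at h
      exact hx (by ext i j; simpa using h i j)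
    have hsum : (1 : Matrix (Fin n) (Fin n) F) = ∑ k : Fin n,
        single k i (x i j)⁻¹ * x * single j k (1 : F) := by
      ext a b
      rw [Matrix.sum_apply]
      rw [Finset.sum_eq_single b]
      · by_cases hab : a = b
        · subst hab
          simp [Matrix.one_apply, inv_mul_cancel₀ hij]
        · simp [Matrix.one_apply, hab]
      · intro k _ hk
        simp [Ne.symm hk]
      · simp
    -- find homogeneous a, b with nonzero degree-one component of a*x*b
    have key : ∃ (h h' : G) (a b : Matrix (Fin n) (Fin n) F), a ∈ ℛ h ∧ b ∈ ℛ h' ∧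
        π (a * x * b) ≠ 0 := by
      by_contra hcon
      push_neg at hcon
      have h2 : π (1 : Matrix (Fin n) (Fin n) F) = 0 := by
        conv_lhs => rw [hsum]
        have hexp : ∀ k : Fin n,
            single k i (x i j)⁻¹ * x * single j k (1 : F) =
            ∑ h ∈ (DirectSum.decompose ℛ
                (single k i (x i j)⁻¹ : Matrix (Fin n) (Fin n) F)).support,
              ∑ h' ∈ (DirectSum.decompose ℛ
                  (single j k (1:F) : Matrix (Fin n) (Fin n) F)).support,
                (DirectSum.decompose ℛ
                    (single k i (x i j)⁻¹ : Matrix (Fin n) (Fin n) F) h :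
                  Matrix (Fin n) (Fin n) F) * x *
                  (DirectSum.decompose ℛ
                      (single j k (1:F) : Matrix (Fin n) (Fin n) F) h' :
                    Matrix (Fin n) (Fin n) F) := by
          intro k
          conv_lhs =>
            rw [← DirectSum.sum_support_decompose ℛ
                (single k i (x i j)⁻¹ : Matrix (Fin n) (Fin n) F),
              ← DirectSum.sum_support_decompose ℛ
                (single j k (1:F) : Matrix (Fin n) (Fin n) F)]
          rw [Finset.sum_mul, Finset.sum_mul]
          simp_rw [Finset.mul_sum]
        simp_rw [hexp]
        rw [map_sum]
        refine Finset.sum_eq_zero fun k _ => ?_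
        rw [map_sum]
        refine Finset.sum_eq_zero fun h _ => ?_
        rw [map_sum]
        refine Finset.sum_eq_zero fun h' _ => ?_
        exact hcon h h' _ _ (SetLike.coe_mem _) (SetLike.coe_mem _)
      rw [hπ1] at h2
      exact hone_ne h2
    obtain ⟨h, h', a, b, ha, hb, hne⟩ := key
    rw [hπ] at hne
    have haxb : a * x * b ∈ ℛ (h * g * h') :=
      hmulmem _ _ _ _ (hmulmem _ _ _ _ ha hxg) hb
    have hdeg : h * g * h' = 1 := by
      by_contra hd
      exact hne (by rw [DirectSum.decompose_of_mem_ne ℛ haxb hd])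
    rw [hdeg] at haxb
    rw [DirectSum.decompose_of_mem_same ℛ haxb] at hne
    obtain ⟨d, hd⟩ := hR1 _ haxb
    have hdne : d ≠ 0 := by
      rintro rfl
      rw [zero_smul] at hd
      exact hne hd
    have h1 : (d⁻¹ • a) * (x * b) = 1 := by
      have heq : (d⁻¹ • a) * (x * b) = d⁻¹ • (a * x * b) := by
        rw [smul_mul_assoc, mul_assoc]
      rw [heq, hd, smul_smul, inv_mul_cancel₀ hdne, one_smul]
    have h2 : x * (b * (d⁻¹ • a)) = 1 := by
      rw [mul_eq_one_comm] at h1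
      rw [mul_assoc] at h1
      exact h1
    have h3 : (b * (d⁻¹ • a)) * x = 1 := mul_eq_one_comm.mp h2
    exact ⟨⟨x, b * (d⁻¹ • a), h2, h3⟩, rfl⟩
  -- the subgroup
  refine ⟨{ carrier := {g : G | ℛ g ≠ ⊥}
            one_mem' := ?_
            mul_mem' := ?_
            inv_mem' := ?_ }, fun g => Iff.rfl⟩
  · rintro g h hg hh
    obtain ⟨x, hxg, hx⟩ := (Submodule.ne_bot_iff _).mp hg
    obtain ⟨y, hyh, hy⟩ := (Submodule.ne_bot_iff _).mp hh
    refine (Submodule.ne_bot_iff _).mpr ⟨x * y, hmulmem _ _ _ _ hxg hyh, ?_⟩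
    intro hxy
    obtain ⟨u, hu⟩ := hunit g x hxg hx
    apply hy
    have hinv : (↑u⁻¹ : Matrix (Fin n) (Fin n) F) * (x * y) = y := by
      rw [← mul_assoc, ← hu, u.inv_mul, one_mul]
    rw [← hinv, hxy, mul_zero]
  · exact Submodule.ne_bot_iff _ |>.mpr ⟨1, hone, hone_ne⟩
  · rintro g hg
    obtain ⟨x, hxg, hx⟩ := (Submodule.ne_bot_iff _).mp hg
    obtain ⟨u, hu⟩ := hunit g x hxg hx
    have hwx : (↑u⁻¹ : Matrix (Fin n) (Fin n) F) * x = 1 := by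
      rw [← hu]; exact u.inv_mul
    refine (Submodule.ne_bot_iff _).mpr
      ⟨(DirectSum.decompose ℛ (↑u⁻¹ : Matrix (Fin n) (Fin n) F) g⁻¹ :
          Matrix (Fin n) (Fin n) F), SetLike.coe_mem _, ?_⟩
    intro hzero
    have h2 : π (1 : Matrix (Fin n) (Fin n) F) = 0 := by
      conv_lhs => rw [← hwx]
      conv_lhs => rw [show (↑u⁻¹ : Matrix (Fin n) (Fin n) F) * x =
          ∑ h ∈ (DirectSum.decompose ℛ (↑u⁻¹ : Matrix (Fin n) (Fin n) F)).support,
            (DirectSum.decompose ℛ (↑u⁻¹ : Matrix (Fin n) (Fin n) F) h :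
              Matrix (Fin n) (Fin n) F) * x by
            rw [← Finset.sum_mul,
              DirectSum.sum_support_decompose ℛ (↑u⁻¹ : Matrix (Fin n) (Fin n) F)]]
      rw [map_sum]
      refine Finset.sum_eq_zero fun h _ => ?_
      by_cases hh : h = g⁻¹
      · subst hh
        rw [hzero, zero_mul, map_zero]
      · have hne1 : h * g ≠ 1 := fun hc => hh (eq_inv_of_mul_eq_one_left hc)
        have hmem : (DirectSum.decompose ℛ (↑u⁻¹ : Matrix (Fin n) (Fin n) F) h :
            Matrix (Fin n) (Fin n) F) * x ∈ ℛ (h * g) :=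
          hmulmem _ _ _ _ (SetLike.coe_mem _) hxg
        rw [hπ, DirectSum.decompose_of_mem_ne ℛ hmem hne1]
    rw [hπ1] at h2
    exact hone_ne h2
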